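/- Let Xᵗ⁺¹ = [U, U⊥][[B̂, D̂₂ᵀ],[D̂₁, D̂₁ B̂⁻¹ D̂₂ᵀ]][V, V⊥]ᵀ and X̄ = [U, U⊥][[B̃, D̃₂ᵀ],[D̃₁, D̃₁ B̃⁻¹ D̃₂ᵀ]][V, V⊥]ᵀ with B̂, B̃ invertible. Suppose max(‖D̂₁ B̂⁻¹‖, ‖B̂⁻¹ D̂₂ᵀ‖) ≤ ρ and max(‖D̃₁ B̃⁻¹‖, ‖B̃⁻¹ D̃₂ᵀ‖) ≤ θ. Then ‖Xᵗ⁺¹ − X̄‖_F² ≤ (1 + 3 max(ρ, θ, ρθ)²) (‖B̂ − B̃‖_F² + ‖D̂₁ − D̃₁‖_F² + ‖D̂₂ − D̃₂‖_F²). -/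

import Mathlib

open Matrix
noncomputable section

/-- Frobenius norm of a real matrix. -/
def frob {m n : Type*} [Fintype m] [Fintype n] (A : Matrix m n ℝ) : ℝ :=
  Real.sqrt (∑ i, ∑ j, (A i j) ^ 2)

/-- Spectral (operator ℓ²→ℓ²) norm of a real matrix. -/
def spec {m n : Type*} [Fintype m] [Fintype n] [DecidableEq n] (A : Matrix m n ℝ) : ℝ :=
  ‖LinearMap.toContinuousLinearMap (Matrix.toEuclideanLin A)‖

/-- Nuclear norm: sum of singular values (square roots of eigenvalues of AᵀA). -/
def nuc {m n : Type*} [Fintype m] [Fintype n] [DecidableEq n] (A : Matrix m n ℝ) : ℝ :=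
  ∑ i, Real.sqrt ((show (Aᵀ * A).IsHermitian by simpa using Matrix.isHermitian_conjTranspose_mul_self A).eigenvalues i)

attribute [local instance] Matrix.frobeniusSeminormedAddCommGroup

section aux
variable {m n k m' n' : Type*} [Fintype m] [Fintype n] [Fintype k] [Fintype m'] [Fintype n']

lemma frob_nonneg (A : Matrix m n ℝ) : 0 ≤ frob A := Real.sqrt_nonneg _

lemma frob_sq (A : Matrix m n ℝ) : frob A ^ 2 = ∑ i, ∑ j, (A i j) ^ 2 :=
  Real.sq_sqrt (by positivity)

lemma frob_eq_norm (A : Matrix m n ℝ) : frob A = ‖A‖ := by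
  rw [Matrix.frobenius_norm_def, frob, Real.sqrt_eq_rpow]
  congr 1
  refine Finset.sum_congr rfl fun i _ => Finset.sum_congr rfl fun j _ => ?_
  rw [Real.rpow_two, Real.norm_eq_abs, sq_abs]

lemma frob_add_le (A B : Matrix m n ℝ) : frob (A + B) ≤ frob A + frob B := by
  simp only [frob_eq_norm]; exact norm_add_le A B

lemma frob_transpose (A : Matrix m n ℝ) : frob Aᵀ = frob A := by
  simp only [frob_eq_norm]; exact Matrix.frobenius_norm_transpose A

lemma frob_sub_comm (A B : Matrix m n ℝ) : frob (A - B) = frob (B - A) := by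
  simp only [frob_eq_norm]; exact norm_sub_rev A B

lemma spec_nonneg [DecidableEq n] (A : Matrix m n ℝ) : 0 ≤ spec A := norm_nonneg _

end aux

section aux2
variable {m n k q s t : Type*} [Fintype m] [Fintype n] [Fintype k] [Fintype q] [Fintype s] [Fintype t]

lemma mulVec_norm_le [DecidableEq n] (A : Matrix m n ℝ) (v : n → ℝ) :
    ∑ i, (A.mulVec v i) ^ 2 ≤ spec A ^ 2 * ∑ j, (v j) ^ 2 := by
  have h := (LinearMap.toContinuousLinearMap (Matrix.toEuclideanLin A)).le_opNorm
    ((WithLp.equiv 2 (n → ℝ)).symm v)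
  have hv : ‖(WithLp.equiv 2 (n → ℝ)).symm v‖ = Real.sqrt (∑ j, (v j) ^ 2) := by
    rw [EuclideanSpace.norm_eq]
    congr 1
    refine Finset.sum_congr rfl fun j _ => ?_
    rw [WithLp.equiv_symm_apply, PiLp.toLp_apply, Real.norm_eq_abs, sq_abs]
  have hAv : ‖LinearMap.toContinuousLinearMap (Matrix.toEuclideanLin A)
      ((WithLp.equiv 2 (n → ℝ)).symm v)‖ = Real.sqrt (∑ i, (A.mulVec v i) ^ 2) := by
    rw [LinearMap.coe_toContinuousLinearMap']
    rw [show Matrix.toEuclideanLin A ((WithLp.equiv 2 (n → ℝ)).symm v)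
        = (WithLp.equiv 2 (m → ℝ)).symm (A.mulVec v) from rfl]
    rw [EuclideanSpace.norm_eq]
    congr 1
    refine Finset.sum_congr rfl fun i _ => ?_
    rw [WithLp.equiv_symm_apply, PiLp.toLp_apply, Real.norm_eq_abs, sq_abs]
  rw [hAv, hv] at h
  have h2 : (Real.sqrt (∑ i, (A.mulVec v i) ^ 2)) ^ 2 ≤ (spec A * Real.sqrt (∑ j, (v j) ^ 2)) ^ 2 := by
    apply pow_le_pow_left₀ (Real.sqrt_nonneg _) h
  rwa [Real.sq_sqrt (by positivity), mul_pow, Real.sq_sqrt (by positivity)] at h2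

lemma frob_mul_le [DecidableEq n] (A : Matrix m n ℝ) (X : Matrix n k ℝ) :
    frob (A * X) ≤ spec A * frob X := by
  have key : frob (A * X) ^ 2 ≤ spec A ^ 2 * frob X ^ 2 := by
    rw [frob_sq, frob_sq, Finset.sum_comm, Finset.sum_comm (γ := n)]
    rw [Finset.mul_sum]
    refine Finset.sum_le_sum fun j _ => ?_
    have := mulVec_norm_le A (fun i => X i j)
    simpa [Matrix.mulVec, Matrix.mul_apply, dotProduct] using this
  calc frob (A * X) = Real.sqrt (frob (A * X) ^ 2) := (Real.sqrt_sq (frob_nonneg _)).symm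
    _ ≤ Real.sqrt (spec A ^ 2 * frob X ^ 2) := Real.sqrt_le_sqrt key
    _ = spec A * frob X := by
        rw [← mul_pow, Real.sqrt_sq (mul_nonneg (spec_nonneg A) (frob_nonneg X))]

lemma spec_transpose [DecidableEq m] [DecidableEq n] (A : Matrix m n ℝ) : spec Aᵀ = spec A := by
  have h : Aᵀ = Aᴴ := by
    ext i j; simp [Matrix.conjTranspose_apply]
  rw [spec, h, Matrix.toEuclideanLin_conjTranspose_eq_adjoint,
    LinearMap.adjoint_toContinuousLinearMap]
  exact LinearIsometryEquiv.norm_map ContinuousLinearMap.adjoint _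

lemma frob_mul_le_right [DecidableEq m] [DecidableEq n] (X : Matrix k n ℝ) (A : Matrix n m ℝ) :
    frob (X * A) ≤ frob X * spec A := by
  have : frob (X * A) = frob (Aᵀ * Xᵀ) := by rw [← Matrix.transpose_mul, frob_transpose]
  rw [this]
  calc frob (Aᵀ * Xᵀ) ≤ spec Aᵀ * frob Xᵀ := frob_mul_le _ _
    _ = frob X * spec A := by rw [spec_transpose, frob_transpose, mul_comm]

lemma frob_fromBlocks (A : Matrix m n ℝ) (B : Matrix m n' ℝ) (C : Matrix m' n ℝ)
    (D : Matrix m' n' ℝ) [Fintype m'] [Fintype n'] :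
    frob (fromBlocks A B C D) ^ 2 = frob A ^ 2 + frob B ^ 2 + frob C ^ 2 + frob D ^ 2 := by
  simp only [frob_sq, Fintype.sum_sum_type, Matrix.fromBlocks_apply₁₁,
    Matrix.fromBlocks_apply₁₂, Matrix.fromBlocks_apply₂₁, Matrix.fromBlocks_apply₂₂,
    Finset.sum_add_distrib]
  ring

lemma frob_sq_trace (A : Matrix m n ℝ) : frob A ^ 2 = (Aᵀ * A).trace := by
  rw [frob_sq, Matrix.trace]
  rw [Finset.sum_comm]
  refine Finset.sum_congr rfl fun j _ => ?_
  simp [Matrix.mul_apply, Matrix.diag, sq]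

lemma frob_conj {p q' : Type*} [Fintype p] [Fintype q'] [DecidableEq m] [DecidableEq n]
    (Q : Matrix p m ℝ) (W : Matrix q' n ℝ) (A : Matrix m n ℝ)
    (hQ : Qᵀ * Q = 1) (hW : Wᵀ * W = 1) : frob (Q * A * Wᵀ) = frob A := by
  have h : frob (Q * A * Wᵀ) ^ 2 = frob A ^ 2 := by
    rw [frob_sq_trace, frob_sq_trace]
    have e1 : (Q * A * Wᵀ)ᵀ * (Q * A * Wᵀ) = W * (Aᵀ * A * Wᵀ) := by
      rw [Matrix.transpose_mul, Matrix.transpose_mul, Matrix.transpose_transpose,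
        Matrix.mul_assoc Q A Wᵀ, Matrix.mul_assoc W,
        ← Matrix.mul_assoc (Aᵀ * Qᵀ) Q (A * Wᵀ), Matrix.mul_assoc Aᵀ Qᵀ Q, hQ,
        Matrix.mul_one, ← Matrix.mul_assoc Aᵀ A Wᵀ]
    rw [e1, Matrix.trace_mul_comm, Matrix.mul_assoc (Aᵀ * A) Wᵀ W, hW, Matrix.mul_one]
  rw [← Real.sqrt_sq (frob_nonneg (Q * A * Wᵀ)), ← Real.sqrt_sq (frob_nonneg A), h]

end aux2

lemma fromBlocks_sub' {m n m' n' : Type*} (A A' : Matrix m n ℝ) (B B' : Matrix m n' ℝ)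
    (C C' : Matrix m' n ℝ) (D D' : Matrix m' n' ℝ) :
    fromBlocks A B C D - fromBlocks A' B' C' D'
      = fromBlocks (A - A') (B - B') (C - C') (D - D') := by
  ext (i | i) (j | j) <;> simp [Matrix.sub_apply]

/-- Frobenius error bound between two retracted iterates in terms of the block
differences: ‖Xᵗ⁺¹ − X̄‖_F² ≤ (1 + 3 max(ρ,θ,ρθ)²)(‖B̂−B̃‖_F² + ‖D̂₁−D̃₁‖_F² + ‖D̂₂−D̃₂‖_F²). -/
theorem stmt_12 {p₁ p₂ r : ℕ}
    (U : Matrix (Fin p₁) (Fin r) ℝ) (Up : Matrix (Fin p₁) (Fin (p₁ - r)) ℝ)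
    (V : Matrix (Fin p₂) (Fin r) ℝ) (Vp : Matrix (Fin p₂) (Fin (p₂ - r)) ℝ)
    (hU : (fromCols U Up)ᵀ * fromCols U Up = 1)
    (hU' : fromCols U Up * (fromCols U Up)ᵀ = 1)
    (hV : (fromCols V Vp)ᵀ * fromCols V Vp = 1)
    (hV' : fromCols V Vp * (fromCols V Vp)ᵀ = 1)
    (Bh Bt : Matrix (Fin r) (Fin r) ℝ) (hBh : IsUnit Bh) (hBt : IsUnit Bt)
    (D1h D1t : Matrix (Fin (p₁ - r)) (Fin r) ℝ)
    (D2h D2t : Matrix (Fin (p₂ - r)) (Fin r) ℝ)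
    (ρ θ : ℝ)
    (hρ : max (spec (D1h * Bh⁻¹)) (spec (Bh⁻¹ * D2hᵀ)) ≤ ρ)
    (hθ : max (spec (D1t * Bt⁻¹)) (spec (Bt⁻¹ * D2tᵀ)) ≤ θ) :
    frob (fromCols U Up * fromBlocks Bh D2hᵀ D1h (D1h * Bh⁻¹ * D2hᵀ) * (fromCols V Vp)ᵀ
          - fromCols U Up * fromBlocks Bt D2tᵀ D1t (D1t * Bt⁻¹ * D2tᵀ) * (fromCols V Vp)ᵀ) ^ 2
      ≤ (1 + 3 * max ρ (max θ (ρ * θ)) ^ 2) *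
          (frob (Bh - Bt) ^ 2 + frob (D1h - D1t) ^ 2 + frob (D2h - D2t) ^ 2) := by
  classical
  -- combine the two products into one
  rw [← Matrix.sub_mul, ← Matrix.mul_sub, fromBlocks_sub',
    frob_conj _ _ _ hU hV, frob_fromBlocks, ← Matrix.transpose_sub, frob_transpose]
  set b := frob (Bh - Bt) with hb
  set d1 := frob (D1h - D1t) with hd1
  set d2 := frob (D2h - D2t) with hd2
  set M := max ρ (max θ (ρ * θ)) with hM
  have hρ1 : spec (D1h * Bh⁻¹) ≤ ρ := (le_max_left _ _).trans hρ
  have hρ2 : spec (Bh⁻¹ * D2hᵀ) ≤ ρ := (le_max_right _ _).trans hρ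
  have hθ1 : spec (D1t * Bt⁻¹) ≤ θ := (le_max_left _ _).trans hθ
  have hθ2 : spec (Bt⁻¹ * D2tᵀ) ≤ θ := (le_max_right _ _).trans hθ
  have hρ0 : 0 ≤ ρ := (spec_nonneg _).trans hρ1
  have hθ0 : 0 ≤ θ := (spec_nonneg _).trans hθ1
  have hMρ : ρ ≤ M := le_max_left _ _
  have hMθ : θ ≤ M := (le_max_left _ _).trans (le_max_right _ _)
  have hMρθ : ρ * θ ≤ M := (le_max_right _ _).trans (le_max_right _ _)
  have hM0 : 0 ≤ M := hρ0.trans hMρ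
  have hbn : 0 ≤ b := frob_nonneg _
  have hd1n : 0 ≤ d1 := frob_nonneg _
  have hd2n : 0 ≤ d2 := frob_nonneg _
  -- the key bound on the (2,2) block
  have hBh' : Bh⁻¹ * Bh = 1 := Matrix.nonsing_inv_mul Bh ((Matrix.isUnit_iff_isUnit_det Bh).mp hBh)
  have hBt' : Bt * Bt⁻¹ = 1 := Matrix.mul_nonsing_inv Bt ((Matrix.isUnit_iff_isUnit_det Bt).mp hBt)
  have hE : D1h * Bh⁻¹ * D2hᵀ - D1t * Bt⁻¹ * D2tᵀ
      = (D1h * Bh⁻¹) * (D2hᵀ - D2tᵀ) + (D1h * Bh⁻¹) * ((Bt - Bh) * (Bt⁻¹ * D2tᵀ))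
        + (D1h - D1t) * (Bt⁻¹ * D2tᵀ) := by
    have k1 : (Bt - Bh) * (Bt⁻¹ * D2tᵀ) = D2tᵀ - Bh * (Bt⁻¹ * D2tᵀ) := by
      rw [Matrix.sub_mul, ← Matrix.mul_assoc Bt, hBt', Matrix.one_mul]
    have k2 : D1h * Bh⁻¹ * (Bh * (Bt⁻¹ * D2tᵀ)) = D1h * (Bt⁻¹ * D2tᵀ) := by
      rw [Matrix.mul_assoc D1h Bh⁻¹, ← Matrix.mul_assoc Bh⁻¹ Bh, hBh', Matrix.one_mul]
    rw [k1, Matrix.mul_sub, Matrix.mul_sub, Matrix.sub_mul, k2,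
      ← Matrix.mul_assoc D1t Bt⁻¹ D2tᵀ, ← Matrix.mul_assoc D1h Bt⁻¹ D2tᵀ]
    abel
  have hEb : frob (D1h * Bh⁻¹ * D2hᵀ - D1t * Bt⁻¹ * D2tᵀ) ≤ M * (b + d1 + d2) := by
    rw [hE]
    have t1 : frob ((D1h * Bh⁻¹) * (D2hᵀ - D2tᵀ)) ≤ M * d2 := by
      calc frob ((D1h * Bh⁻¹) * (D2hᵀ - D2tᵀ))
          ≤ spec (D1h * Bh⁻¹) * frob (D2hᵀ - D2tᵀ) := frob_mul_le _ _
        _ = spec (D1h * Bh⁻¹) * d2 := by rw [← Matrix.transpose_sub, frob_transpose, hd2]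
        _ ≤ M * d2 := mul_le_mul_of_nonneg_right (hρ1.trans hMρ) hd2n
    have t2 : frob ((D1h * Bh⁻¹) * ((Bt - Bh) * (Bt⁻¹ * D2tᵀ))) ≤ M * b := by
      calc frob ((D1h * Bh⁻¹) * ((Bt - Bh) * (Bt⁻¹ * D2tᵀ)))
          ≤ spec (D1h * Bh⁻¹) * frob ((Bt - Bh) * (Bt⁻¹ * D2tᵀ)) := frob_mul_le _ _
        _ ≤ ρ * (frob (Bt - Bh) * spec (Bt⁻¹ * D2tᵀ)) := by
            apply mul_le_mul hρ1 (frob_mul_le_right _ _) (frob_nonneg _) hρ0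
        _ ≤ ρ * (b * θ) := by
            apply mul_le_mul_of_nonneg_left _ hρ0
            rw [frob_sub_comm, ← hb]
            exact mul_le_mul_of_nonneg_left hθ2 hbn
        _ = (ρ * θ) * b := by ring
        _ ≤ M * b := mul_le_mul_of_nonneg_right hMρθ hbn
    have t3 : frob ((D1h - D1t) * (Bt⁻¹ * D2tᵀ)) ≤ M * d1 := by
      calc frob ((D1h - D1t) * (Bt⁻¹ * D2tᵀ))
          ≤ frob (D1h - D1t) * spec (Bt⁻¹ * D2tᵀ) := frob_mul_le_right _ _
        _ ≤ d1 * θ := mul_le_mul_of_nonneg_left hθ2 hd1n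
        _ = θ * d1 := mul_comm _ _
        _ ≤ M * d1 := mul_le_mul_of_nonneg_right hMθ hd1n
    calc frob (_ + _ + _) ≤ frob (_ + _) + frob _ := frob_add_le _ _
      _ ≤ frob _ + frob _ + frob _ := by
          exact add_le_add (frob_add_le _ _) le_rfl
      _ ≤ M * d2 + M * b + M * d1 := add_le_add (add_le_add t1 t2) t3
      _ = M * (b + d1 + d2) := by ring
  have hEsq : frob (D1h * Bh⁻¹ * D2hᵀ - D1t * Bt⁻¹ * D2tᵀ) ^ 2
      ≤ 3 * M ^ 2 * (b ^ 2 + d1 ^ 2 + d2 ^ 2) := by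
    have h1 := pow_le_pow_left₀ (frob_nonneg _) hEb 2
    have h2 : (M * (b + d1 + d2)) ^ 2 ≤ 3 * M ^ 2 * (b ^ 2 + d1 ^ 2 + d2 ^ 2) := by
      nlinarith [sq_nonneg (b - d1), sq_nonneg (b - d2), sq_nonneg (d1 - d2), sq_nonneg M]
    exact h1.trans h2
  nlinarith [hEsq, sq_nonneg b, sq_nonneg d1, sq_nonneg d2]
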